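/- Let θ be an irrational real number, let q_i denote the denominator of the i-th convergent of the continued fraction expansion of θ, let Δ_i := ‖θ q_i‖_ℤ, let α = 1/8 and 0 < β < 1, and let N be a natural number. Let E := {θq − p : q ∈ ℕ, 1 ≤ q < q_{N+1}, p ∈ ℤ} ⊆ ℝ. If B ⊆ ℝ is a closed ball of radius ρ with αβΔ_N < 2ρ ≤ Δ_N, then there exists a closed ball W ⊆ B of radius αρ such that for every x ∈ W and every e ∈ E one has |x − e| > αβΔ_N/4; in particular W is disjoint from any union of closed balls of radii at most αβΔ_N/4 centered at the points of E. -/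
import Mathlib


/-- `normZ x = ‖x‖_ℤ` is the distance from `x` to the nearest integer. -/
noncomputable def normZ (x : ℝ) : ℝ := ⨅ p : ℤ, |x - (p : ℝ)|

/-- `qdenom θ i` is the denominator `q_i` of the `i`-th convergent of the continued
fraction expansion of `θ`. -/
noncomputable def qdenom (θ : ℝ) (i : ℕ) : ℝ := (GenContFract.of θ).dens i

/-- `Delta θ i = Δ_i = ‖θ q_i‖_ℤ`. -/
noncomputable def Delta (θ : ℝ) (i : ℕ) : ℝ := normZ (θ * qdenom θ i)


open GenContFract

lemma normZ_le (x : ℝ) (p : ℤ) : normZ x ≤ |x - p| :=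
  ciInf_le ⟨0, by rintro y ⟨q, rfl⟩; positivity⟩ p

lemma normZ_nonneg (x : ℝ) : 0 ≤ normZ x := le_ciInf fun p => abs_nonneg _

lemma normZ_le_one (x : ℝ) : normZ x ≤ 1 :=
  (normZ_le x (round x)).trans ((Real.dist_eq x _ ▸ abs_sub_round x).trans (by norm_num))


lemma of_not_term (θ : ℝ) (hθ : Irrational θ) (n : ℕ) : ¬(GenContFract.of θ).TerminatedAt n := by
  intro h
  obtain ⟨q, hq⟩ := (GenContFract.terminates_iff_rat θ).1 ⟨n, h⟩
  exact hθ ⟨q, hq.symm⟩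

lemma stream_some (θ : ℝ) (hθ : Irrational θ) (n : ℕ) :
    ∃ ifp, IntFractPair.stream θ n = some ifp ∧ 0 < ifp.fr := by
  have h1 : IntFractPair.stream θ (n+1) ≠ none := fun h =>
    of_not_term θ hθ n (of_terminatedAt_n_iff_succ_nth_intFractPair_stream_eq_none.2 h)
  rcases h : IntFractPair.stream θ n with _ | ifp
  · exact absurd (IntFractPair.succ_nth_stream_eq_none_iff.2 (Or.inl h)) h1
  · refine ⟨ifp, rfl, lt_of_le_of_ne (IntFractPair.nth_stream_fr_nonneg h) ?_⟩
    intro h0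
    exact h1 (IntFractPair.succ_nth_stream_eq_none_iff.2 (Or.inr ⟨ifp, h, h0.symm⟩))

lemma dens_pos (θ : ℝ) (hθ : Irrational θ) (n : ℕ) : 0 < (GenContFract.of θ).dens n := by
  have := succ_nth_fib_le_of_nth_den (v := θ) (n := n) (Or.inr (of_not_term θ hθ _))
  calc (0:ℝ) < Nat.fib (n+1) := by exact_mod_cast Nat.fib_pos.2 n.succ_pos
  _ ≤ _ := this

lemma sign_lemma (θ : ℝ) (hθ : Irrational θ) (n : ℕ) :
    0 < (-1)^n * (θ * (GenContFract.of θ).dens n - (GenContFract.of θ).nums n) := by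
  set g := GenContFract.of θ with hg
  obtain ⟨ifp, hifp, hfr⟩ := stream_some θ hθ n
  have hB : (g.contsAux (n+1)).b = g.dens n := by
    rw [den_eq_conts_b, nth_cont_eq_succ_nth_contAux]
  have hpB : 0 ≤ (g.contsAux n).b := zero_le_of_contsAux_b
  have hBpos : 0 < (g.contsAux (n+1)).b := hB ▸ dens_pos θ hθ n
  have hfri : 0 < ifp.fr⁻¹ := inv_pos.2 hfr
  have hden : 0 < (g.contsAux (n+1)).b * (ifp.fr⁻¹ * (g.contsAux (n+1)).b + (g.contsAux n).b) := by
    positivity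
  have hsub := sub_convs_eq hifp
  simp only [← hg, if_neg hfr.ne'] at hsub
  have hdne : g.dens n ≠ 0 := (dens_pos θ hθ n).ne'
  have key : θ * g.dens n - g.nums n = g.dens n * (θ - g.convs n) := by
    rw [conv_eq_num_div_den]; field_simp
  rw [hB] at hsub hden
  rw [key, hsub]
  set X := g.dens n * (ifp.fr⁻¹ * g.dens n + (g.contsAux n).b) with hX
  rcases Nat.even_or_odd n with he | ho
  · rw [he.neg_one_pow, one_mul]
    exact mul_pos (dens_pos θ hθ n) (one_div_pos.2 hden)
  · rw [ho.neg_one_pow]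
    have hr : (-1:ℝ) * (g.dens n * (-1 / X)) = g.dens n * (1 / X) := by ring
    rw [hr]
    exact mul_pos (dens_pos θ hθ n) (one_div_pos.2 hden)

lemma contsAux_int (θ : ℝ) (hθ : Irrational θ) : ∀ n : ℕ,
    (∃ a b : ℤ, ((GenContFract.of θ).contsAux n).a = a ∧ ((GenContFract.of θ).contsAux n).b = b) ∧
    (∃ a b : ℤ, ((GenContFract.of θ).contsAux (n+1)).a = a ∧ ((GenContFract.of θ).contsAux (n+1)).b = b) := by
  intro n
  induction n with
  | zero =>
    refine ⟨⟨1, 0, ?_, ?_⟩, ⟨⌊θ⌋, 1, ?_, ?_⟩⟩ <;>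
      simp [zeroth_contAux_eq_one_zero, first_contAux_eq_h_one, of_h_eq_floor]
  | succ n ih =>
    obtain ⟨⟨a0, b0, ha0, hb0⟩, ⟨a1, b1, ha1, hb1⟩⟩ := ih
    refine ⟨⟨a1, b1, ha1, hb1⟩, ?_⟩
    obtain ⟨gp, hgp⟩ := Option.ne_none_iff_exists'.1 (of_not_term θ hθ n)
    obtain ⟨z, hz⟩ := exists_int_eq_of_partDen (partDen_eq_s_b hgp)
    have hone : gp.a = 1 := of_partNum_eq_one (partNum_eq_s_a hgp)
    have hrec := contsAux_recurrence hgp rfl rfl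
    refine ⟨z * a1 + a0, z * b1 + b0, ?_, ?_⟩ <;>
      simp [hrec, hone, hz, ha0, hb0, ha1, hb1]

lemma nums_int (θ : ℝ) (hθ : Irrational θ) (n : ℕ) :
    ∃ a b : ℤ, (GenContFract.of θ).nums n = a ∧ (GenContFract.of θ).dens n = b := by
  obtain ⟨a, b, ha, hb⟩ := (contsAux_int θ hθ n).2
  exact ⟨a, b, by rw [num_eq_conts_a, nth_cont_eq_succ_nth_contAux, ha],
    by rw [den_eq_conts_b, nth_cont_eq_succ_nth_contAux, hb]⟩

lemma det_real (θ : ℝ) (hθ : Irrational θ) (n : ℕ) :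
    (GenContFract.of θ).nums n * (GenContFract.of θ).dens (n+1)
      - (GenContFract.of θ).dens n * (GenContFract.of θ).nums (n+1) = (-1)^(n+1) :=
  (SimpContFract.of θ).determinant (of_not_term θ hθ n)

lemma key_lemma (θ : ℝ) (hθ : Irrational θ) (N : ℕ) (k p : ℤ) (hk1 : 1 ≤ k)
    (hk2 : (k:ℝ) < qdenom θ (N+1)) : Delta θ N ≤ |θ * k - p| := by
  obtain ⟨A, B, hA, hB⟩ := nums_int θ hθ N
  obtain ⟨A', B', hA', hB'⟩ := nums_int θ hθ (N+1)
  have hBpos : 0 < B := by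
    have := dens_pos θ hθ N; rw [hB] at this; exact_mod_cast this
  have hB'pos : 0 < B' := by
    have := dens_pos θ hθ (N+1); rw [hB'] at this; exact_mod_cast this
  have hkB' : k < B' := by
    rw [qdenom, hB'] at hk2; exact_mod_cast hk2
  have hDr := det_real θ hθ N
  rw [hA, hB, hA', hB'] at hDr
  have hD : A * B' - B * A' = (-1)^(N+1) := by exact_mod_cast hDr
  set s : ℤ := (-1)^N with hs_def
  have hss : s * s = 1 := by
    rw [hs_def, ← pow_add]; exact Even.neg_one_pow ⟨N, rfl⟩
  have hD' : A * B' - B * A' = -s := by rw [hD, hs_def, pow_succ]; ring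
  obtain ⟨x, y, hkxy, hpxy⟩ : ∃ x y : ℤ, x * B + y * B' = k ∧ x * A + y * A' = p :=
    ⟨s * (k * A' - p * B'), s * (p * B - k * A),
      by linear_combination (-(s*k)) * hD' + k * hss,
      by linear_combination (-(s*p)) * hD' + p * hss⟩
  set u : ℝ := θ * B - A with hu_def
  set v : ℝ := θ * B' - A' with hv_def
  have hmaster : θ * k - p = x * u + y * v := by
    have h1 : ((x:ℝ) * B + y * B') = (k:ℝ) := by exact_mod_cast congrArg (fun t : ℤ => (t:ℝ)) hkxy
    have h2 : ((x:ℝ) * A + y * A') = (p:ℝ) := by exact_mod_cast congrArg (fun t : ℤ => (t:ℝ)) hpxy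
    rw [hu_def, hv_def]; linear_combination (-θ) * h1 + h2
  set S : ℝ := (-1)^N with hS_def
  have hSabs : |S| = 1 := by rw [hS_def, abs_pow, abs_neg, abs_one, one_pow]
  have hu_sign : 0 < S * u := by
    have := sign_lemma θ hθ N; rw [hA, hB] at this; exact this
  have hv_sign : S * v < 0 := by
    have := sign_lemma θ hθ (N+1); rw [hA', hB'] at this
    rw [pow_succ] at this; rw [hS_def, hv_def]; nlinarith
  set u' : ℝ := S * u with hu'_def
  set v' : ℝ := S * v with hv'_def
  have habs : |θ * k - p| = |(x:ℝ) * u' + y * v'| := by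
    rw [hmaster]
    have h3 : (x:ℝ)*u' + y*v' = S * ((x:ℝ)*u + y*v) := by rw [hu'_def, hv'_def]; ring
    rw [h3, abs_mul, hSabs, one_mul]
  have huu' : |u| = |u'| := by rw [hu'_def, abs_mul, hSabs, one_mul]
  have hDelta : Delta θ N ≤ |u| := by
    have hq : qdenom θ N = (B:ℝ) := hB
    rw [Delta, hq, hu_def]
    exact normZ_le _ A
  rw [habs]
  refine hDelta.trans (huu'.le.trans ?_)
  have hu'pos : 0 < u' := hu_sign
  have hv'neg : v' < 0 := hv_sign
  rcases eq_or_ne y 0 with hy | hy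
  · have hx1 : 1 ≤ x := by
      by_contra hcon
      have hx0 : x ≤ 0 := by omega
      have h1 : x * B ≤ 0 := mul_nonpos_iff.2 (Or.inr ⟨hx0, hBpos.le⟩)
      rw [hy] at hkxy
      omega
    have hx1' : (1:ℝ) ≤ x := by exact_mod_cast hx1
    have hxu : 1 * u' ≤ (x:ℝ) * u' := mul_le_mul_of_nonneg_right hx1' hu'pos.le
    rw [hy]
    push_cast
    rw [abs_of_pos hu'pos, abs_of_pos (by linarith : (0:ℝ) < (x:ℝ) * u' + 0 * v')]
    linarith
  · have hx0 : x ≠ 0 := by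
      rintro rfl
      simp only [zero_mul, zero_add] at hkxy
      rcases le_or_gt 1 y with h | h
      · have : 1 * B' ≤ y * B' := mul_le_mul_of_nonneg_right h hB'pos.le
        omega
      · have h' : y ≤ -1 := by omega
        have : y * B' ≤ (-1) * B' := mul_le_mul_of_nonneg_right h' hB'pos.le
        omega
    have hxy : (1 ≤ x ∧ y ≤ -1) ∨ (x ≤ -1 ∧ 1 ≤ y) := by
      rcases lt_trichotomy x 0 with h | h | h
      · rcases lt_trichotomy y 0 with h' | h' | h'
        · exfalso
          have c1 : x * B < 0 := mul_neg_of_neg_of_pos h hBpos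
          have c2 : y * B' < 0 := mul_neg_of_neg_of_pos h' hB'pos
          omega
        · exact absurd h' hy
        · exact Or.inr ⟨by omega, by omega⟩
      · exact absurd h hx0
      · rcases lt_trichotomy y 0 with h' | h' | h'
        · exact Or.inl ⟨by omega, by omega⟩
        · exact absurd h' hy
        · exfalso
          have c1 : 0 < x * B := mul_pos h hBpos
          have c2 : 1 * B' ≤ y * B' := mul_le_mul_of_nonneg_right (by omega : (1:ℤ) ≤ y) hB'pos.le
          omega
    rcases hxy with ⟨h1, h2⟩ | ⟨h1, h2⟩
    · have h1' : (1:ℝ) ≤ x := by exact_mod_cast h1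
      have h2' : (y:ℝ) ≤ -1 := by exact_mod_cast h2
      have c1 : 1 * u' ≤ (x:ℝ) * u' := mul_le_mul_of_nonneg_right h1' hu'pos.le
      have c2 : (-1) * v' ≤ (y:ℝ) * v' := mul_le_mul_of_nonpos_right h2' hv'neg.le
      rw [abs_of_pos hu'pos, abs_of_pos (by linarith : (0:ℝ) < (x:ℝ)*u' + y*v')]
      linarith
    · have h1' : (x:ℝ) ≤ -1 := by exact_mod_cast h1
      have h2' : (1:ℝ) ≤ y := by exact_mod_cast h2
      have c1 : (x:ℝ) * u' ≤ (-1) * u' := mul_le_mul_of_nonneg_right h1' hu'pos.le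
      have c2 : (y:ℝ) * v' ≤ 1 * v' := mul_le_mul_of_nonpos_right h2' hv'neg.le
      rw [abs_of_pos hu'pos, abs_of_neg (by linarith : (x:ℝ)*u' + y*v' < 0)]
      linarith

lemma sep_lemma (θ : ℝ) (hθ : Irrational θ) (N : ℕ) (e e' : ℝ)
    (he : ∃ q : ℕ, 1 ≤ q ∧ (q : ℝ) < qdenom θ (N + 1) ∧ ∃ p : ℤ, e = θ * q - p)
    (he' : ∃ q : ℕ, 1 ≤ q ∧ (q : ℝ) < qdenom θ (N + 1) ∧ ∃ p : ℤ, e' = θ * q - p)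
    (hne : e ≠ e') : Delta θ N ≤ |e - e'| := by
  obtain ⟨q, hq1, hq2, p, rfl⟩ := he
  obtain ⟨q', hq1', hq2', p', rfl⟩ := he'
  have main2 : ∀ (a b : ℕ) (c d : ℤ), 1 ≤ a → (a:ℝ) < qdenom θ (N+1) → 1 ≤ b → b < a →
      Delta θ N ≤ |(θ*a - c) - (θ*b - d)| := by
    intro a b c d ha1 ha2 hb1 hba
    have hk1 : 1 ≤ (a:ℤ) - b := by omega
    have hk2 : (((a:ℤ) - b : ℤ):ℝ) < qdenom θ (N+1) := by
      push_cast
      have : (1:ℝ) ≤ (b:ℝ) := by exact_mod_cast hb1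
      linarith
    have := key_lemma θ hθ N ((a:ℤ) - b) (c - d) hk1 hk2
    have heq : θ * (((a:ℤ) - b : ℤ):ℝ) - ((c - d : ℤ):ℝ) = (θ*a - c) - (θ*b - d) := by
      push_cast; ring
    rwa [heq] at this
  rcases lt_trichotomy q q' with h | h | h
  · rw [abs_sub_comm]
    exact main2 q' q p' p hq1' hq2' hq1 h
  · subst h
    have hpp : p ≠ p' := by
      intro h; subst h; exact hne rfl
    have heq : (θ*q - p) - (θ*q - p') = ((p' - p : ℤ):ℝ) := by push_cast; ring
    rw [heq]
    have h1 : (1:ℝ) ≤ |((p' - p : ℤ):ℝ)| := by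
      rw [← Int.cast_abs]
      exact_mod_cast Int.one_le_abs (by omega)
    exact (normZ_le_one _).trans h1
  · exact main2 q q' p p' hq1 hq2 hq1' h


/-- Given a closed ball `B` of radius `ρ` with `αβΔ_N < 2ρ ≤ Δ_N` (for `α = 1/8`,
`0 < β < 1`), there is a closed ball `W ⊆ B` of radius `αρ` every point of which
stays at distance `> αβΔ_N/4` from every point `θq − p` (`1 ≤ q < q_{N+1}`, `p ∈ ℤ`). -/
theorem exists_white_ball_avoiding (θ : ℝ) (hθ : Irrational θ) (β : ℝ)
    (hβ0 : 0 < β) (hβ1 : β < 1) (N : ℕ) (b ρ : ℝ)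
    (hρ1 : (1 / 8) * β * Delta θ N < 2 * ρ) (hρ2 : 2 * ρ ≤ Delta θ N) :
    ∃ w : ℝ, Metric.closedBall w ((1 / 8) * ρ) ⊆ Metric.closedBall b ρ ∧
      ∀ x ∈ Metric.closedBall w ((1 / 8) * ρ),
        ∀ e ∈ {y : ℝ | ∃ q : ℕ, 1 ≤ q ∧ (q : ℝ) < qdenom θ (N + 1) ∧
          ∃ p : ℤ, y = θ * q - p},
          |x - e| > (1 / 8) * β * Delta θ N / 4 := by 
  set Δ := Delta θ N with hΔ_def
  set m : ℝ := (1 / 8) * β * Δ / 4 with hm_def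
  have hΔnn : 0 ≤ Δ := normZ_nonneg _
  have hΔ0 : 0 < Δ := by nlinarith
  have hρ0 : 0 < ρ := by nlinarith
  have hm0 : 0 < m := by rw [hm_def]; positivity
  have hmρ : m < ρ / 2 := by rw [hm_def]; linarith
  have hmΔ : m < Δ / 32 := by rw [hm_def]; nlinarith
  have good : ∀ w : ℝ, |w - b| ≤ 7/8*ρ →
      (∀ e : ℝ, (∃ q : ℕ, 1 ≤ q ∧ (q:ℝ) < qdenom θ (N+1) ∧ ∃ p : ℤ, e = θ*q - p) →
        m + (1/8)*ρ < |w - e|) →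
      (∃ w : ℝ, Metric.closedBall w ((1 / 8) * ρ) ⊆ Metric.closedBall b ρ ∧
      ∀ x ∈ Metric.closedBall w ((1 / 8) * ρ),
        ∀ e ∈ {y : ℝ | ∃ q : ℕ, 1 ≤ q ∧ (q : ℝ) < qdenom θ (N + 1) ∧
          ∃ p : ℤ, y = θ * q - p},
          |x - e| > m) := by
    intro w hw hgood
    refine ⟨w, ?_, ?_⟩
    · apply Metric.closedBall_subset_closedBall'
      rw [Real.dist_eq]
      linarith
    · intro x hx e he
      simp only [Set.mem_setOf_eq] at he
      have h1 := hgood e he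
      rw [Metric.mem_closedBall, Real.dist_eq] at hx
      have h2 : |w - e| ≤ |w - x| + |x - e| := abs_sub_le w x e
      have h3 : |w - x| = |x - w| := abs_sub_comm w x
      linarith
  by_cases h1 : ∀ e : ℝ, (∃ q : ℕ, 1 ≤ q ∧ (q:ℝ) < qdenom θ (N+1) ∧ ∃ p : ℤ, e = θ*q - p) →
      m + (1/8)*ρ < |(b - 7/8*ρ) - e|
  · exact good _ (by rw [show b - 7/8*ρ - b = -(7/8*ρ) by ring, abs_neg, abs_of_nonneg (by linarith)]) h1
  by_cases h2 : ∀ e : ℝ, (∃ q : ℕ, 1 ≤ q ∧ (q:ℝ) < qdenom θ (N+1) ∧ ∃ p : ℤ, e = θ*q - p) →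
      m + (1/8)*ρ < |b - e|
  · exact good b (by rw [sub_self, abs_zero]; positivity) h2
  by_cases h3 : ∀ e : ℝ, (∃ q : ℕ, 1 ≤ q ∧ (q:ℝ) < qdenom θ (N+1) ∧ ∃ p : ℤ, e = θ*q - p) →
      m + (1/8)*ρ < |(b + 7/8*ρ) - e|
  · exact good _ (by rw [show b + 7/8*ρ - b = 7/8*ρ by ring, abs_of_nonneg (by linarith)]) h3
  exfalso
  push_neg at h1 h2 h3
  obtain ⟨e₁, hee₁, hb1⟩ := h1
  obtain ⟨e₂, hee₂, hb2⟩ := h2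
  obtain ⟨e₃, hee₃, hb3⟩ := h3
  have h12 : e₁ = e₂ := by
    by_contra hne
    have hs := sep_lemma θ hθ N e₁ e₂ hee₁ hee₂ hne
    have t1 : |e₁ - e₂| ≤ |e₁ - (b - 7/8*ρ)| + |(b - 7/8*ρ) - e₂| := abs_sub_le _ _ _
    have t2 : |(b - 7/8*ρ) - e₂| ≤ |(b - 7/8*ρ) - b| + |b - e₂| := abs_sub_le _ _ _
    have t3 : |e₁ - (b - 7/8*ρ)| = |(b - 7/8*ρ) - e₁| := abs_sub_comm _ _
    have t4 : |(b - 7/8*ρ) - b| = 7/8*ρ := by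
      rw [show b - 7/8*ρ - b = -(7/8*ρ) by ring, abs_neg, abs_of_nonneg (by linarith)]
    linarith
  have h23 : e₂ = e₃ := by
    by_contra hne
    have hs := sep_lemma θ hθ N e₂ e₃ hee₂ hee₃ hne
    have t1 : |e₂ - e₃| ≤ |e₂ - (b + 7/8*ρ)| + |(b + 7/8*ρ) - e₃| := abs_sub_le _ _ _
    have t2 : |e₂ - (b + 7/8*ρ)| ≤ |e₂ - b| + |b - (b + 7/8*ρ)| := abs_sub_le _ _ _
    have t3 : |e₂ - b| = |b - e₂| := abs_sub_comm _ _
    have t4 : |b - (b + 7/8*ρ)| = 7/8*ρ := by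
      rw [show b - (b + 7/8*ρ) = -(7/8*ρ) by ring, abs_neg, abs_of_nonneg (by linarith)]
    linarith
  subst h12; subst h23
  have t1 : |(b - 7/8*ρ) - (b + 7/8*ρ)| ≤ |(b - 7/8*ρ) - e₁| + |e₁ - (b + 7/8*ρ)| := abs_sub_le _ _ _
  have t2 : |e₁ - (b + 7/8*ρ)| = |(b + 7/8*ρ) - e₁| := abs_sub_comm _ _
  have t3 : |(b - 7/8*ρ) - (b + 7/8*ρ)| = 7/4*ρ := by
    rw [show (b - 7/8*ρ) - (b + 7/8*ρ) = -(7/4*ρ) by ring, abs_neg, abs_of_nonneg (by linarith)]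
  linarith
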